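/- For every s = diag(t₁,…,tₙ,t₁,…,tₙ) ∈ 𝔱, the centralizer 𝔷(s) = {x ∈ 𝔰𝔭_{2n}(k) : s·x = x·s} has k-dimension at least 3n, with equality if and only if t₁,…,tₙ are pairwise distinct. In particular, no element of 𝔱 has centralizer in 𝔰𝔭_{2n}(k) of dimension n, so 𝔰𝔭_{2n}(k) contains no regular semisimple elements. -/

import Mathlib

open Matrix

/-- The Gram matrix `J = [[0, 1ₙ], [1ₙ, 0]]` of the symplectic form. -/
def Jsp (k : Type*) [Field k] (n : ℕ) : Matrix (Fin n ⊕ Fin n) (Fin n ⊕ Fin n) k :=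
  Matrix.fromBlocks 0 1 1 0

/-- The element `diag(t₁,…,tₙ,t₁,…,tₙ)` of `𝔱`. -/
def tDiag (k : Type*) [Field k] (n : ℕ) (t : Fin n → k) :
    Matrix (Fin n ⊕ Fin n) (Fin n ⊕ Fin n) k :=
  Matrix.fromBlocks (Matrix.diagonal t) 0 0 (Matrix.diagonal t)

/-- The centralizer `𝔷(s) = {x ∈ 𝔰𝔭_{2n}(k) : s·x = x·s}` as a `k`-subspace of `M_{2n}(k)`. -/
def spCent (k : Type*) [Field k] (n : ℕ) (s : Matrix (Fin n ⊕ Fin n) (Fin n ⊕ Fin n) k) :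
    Submodule k (Matrix (Fin n ⊕ Fin n) (Fin n ⊕ Fin n) k) where
  carrier := {x | xᵀ * Jsp k n = Jsp k n * x ∧ s * x = x * s}
  add_mem' := by
    rintro a b ⟨ha1, ha2⟩ ⟨hb1, hb2⟩
    constructor
    · rw [Matrix.transpose_add, Matrix.add_mul, Matrix.mul_add, ha1, hb1]
    · rw [Matrix.mul_add, Matrix.add_mul, ha2, hb2]
  zero_mem' := by
    constructor
    · rw [Matrix.transpose_zero, Matrix.zero_mul, Matrix.mul_zero]
    · rw [Matrix.mul_zero, Matrix.zero_mul]
  smul_mem' := by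
    rintro c a ⟨ha1, ha2⟩
    constructor
    · rw [Matrix.transpose_smul, Matrix.smul_mul, Matrix.mul_smul, ha1]
    · rw [Matrix.mul_smul, Matrix.smul_mul, ha2]

variable {k : Type*} [Field k] {n : ℕ}

lemma jsp_transpose : (Jsp k n)ᵀ = Jsp k n := by
  simp [Jsp, Matrix.fromBlocks_transpose]

lemma jsp_mul_jsp : (Jsp k n) * Jsp k n = 1 := by
  simp [Jsp, Matrix.fromBlocks_multiply, ← Matrix.fromBlocks_one]

lemma jsp_mul_apply (x : Matrix (Fin n ⊕ Fin n) (Fin n ⊕ Fin n) k) (a b) :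
    (Jsp k n * x) a b = x a.swap b := by
  cases a <;> cases b <;>
    simp [Jsp, Matrix.mul_apply, Matrix.fromBlocks, Fintype.sum_sum_type, Matrix.one_apply]

lemma sp_iff (x : Matrix (Fin n ⊕ Fin n) (Fin n ⊕ Fin n) k) :
    xᵀ * Jsp k n = Jsp k n * x ↔ ∀ a b, x b.swap a = x a.swap b := by
  have h : xᵀ * Jsp k n = (Jsp k n * x)ᵀ := by
    rw [Matrix.transpose_mul, jsp_transpose]
  rw [h]
  constructor
  · intro h a b
    have := congrFun (congrFun h a) b
    simpa [Matrix.transpose_apply, jsp_mul_apply] using this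
  · intro h
    ext a b
    simpa [Matrix.transpose_apply, jsp_mul_apply] using h a b

lemma tDiag_eq (t : Fin n → k) : tDiag k n t = Matrix.diagonal (Sum.elim t t) := by
  rw [tDiag, Matrix.fromBlocks_diagonal]

lemma comm_iff (t : Fin n → k) (x : Matrix (Fin n ⊕ Fin n) (Fin n ⊕ Fin n) k) :
    tDiag k n t * x = x * tDiag k n t ↔
      ∀ a b, Sum.elim t t a ≠ Sum.elim t t b → x a b = 0 := by
  rw [tDiag_eq]
  constructor
  · intro h a b hne
    have := congrFun (congrFun h a) b
    rw [Matrix.diagonal_mul, Matrix.mul_diagonal] at this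
    have h2 : (Sum.elim t t a - Sum.elim t t b) * x a b = 0 := by linear_combination this
    rcases mul_eq_zero.mp h2 with h3 | h3
    · exact absurd (sub_eq_zero.mp h3) hne
    · exact h3
  · intro h
    ext a b
    rw [Matrix.diagonal_mul, Matrix.mul_diagonal]
    by_cases he : Sum.elim t t a = Sum.elim t t b
    · rw [he, mul_comm]
    · rw [h a b he, mul_zero, zero_mul]

lemma mem_spCent {s x : Matrix (Fin n ⊕ Fin n) (Fin n ⊕ Fin n) k} :
    x ∈ spCent k n s ↔ xᵀ * Jsp k n = Jsp k n * x ∧ s * x = x * s := Iff.rfl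

lemma mem_spCent_tDiag {t : Fin n → k} {x : Matrix (Fin n ⊕ Fin n) (Fin n ⊕ Fin n) k} :
    x ∈ spCent k n (tDiag k n t) ↔
      (∀ a b, x b.swap a = x a.swap b) ∧
      (∀ a b, Sum.elim t t a ≠ Sum.elim t t b → x a b = 0) := by
  rw [mem_spCent, sp_iff, comm_iff]

/-- `x a b = x b.swap a.swap` version of the symmetry. -/
lemma sym2 {x : Matrix (Fin n ⊕ Fin n) (Fin n ⊕ Fin n) k}
    (h : ∀ a b, x b.swap a = x a.swap b) (a b) : x a b = x b.swap a.swap := by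
  have := h a.swap b
  simpa using this.symm

section dims
variable [DecidableEq k] (t : Fin n → k)

/-- Target model space. -/
abbrev WW (t : Fin n → k) : Type _ :=
  ({p : Fin n × Fin n // t p.1 = t p.2} → k) ×
  ({p : Fin n × Fin n // t p.1 = t p.2 ∧ p.1 ≤ p.2} → k) ×
  ({p : Fin n × Fin n // t p.1 = t p.2 ∧ p.1 ≤ p.2} → k)

def phi : spCent k n (tDiag k n t) →ₗ[k] WW t where
  toFun x := (fun p => x.1 (.inl p.1.1) (.inl p.1.2),
              fun p => x.1 (.inl p.1.1) (.inr p.1.2),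
              fun p => x.1 (.inr p.1.1) (.inl p.1.2))
  map_add' x y := rfl
  map_smul' c x := rfl

def gmat (w : WW t) : Matrix (Fin n ⊕ Fin n) (Fin n ⊕ Fin n) k :=
  fun a b => match a, b with
  | .inl i, .inl j => if h : t i = t j then w.1 ⟨(i, j), h⟩ else 0
  | .inr i, .inr j => if h : t j = t i then w.1 ⟨(j, i), h⟩ else 0
  | .inl i, .inr j => if h : t i = t j then
      (if hle : i ≤ j then w.2.1 ⟨(i, j), ⟨h, hle⟩⟩
       else w.2.1 ⟨(j, i), ⟨h.symm, le_of_not_ge hle⟩⟩) else 0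
  | .inr i, .inl j => if h : t i = t j then
      (if hle : i ≤ j then w.2.2 ⟨(i, j), ⟨h, hle⟩⟩
       else w.2.2 ⟨(j, i), ⟨h.symm, le_of_not_ge hle⟩⟩) else 0

lemma gmat_mem (w : WW t) : gmat t w ∈ spCent k n (tDiag k n t) := by
  rw [mem_spCent_tDiag]
  constructor
  · rintro (a | a) (b | b)
    · -- x (inr b) (inl a) = x (inr a) (inl b)
      show gmat t w (.inr b) (.inl a) = gmat t w (.inr a) (.inl b)
      by_cases h : t a = t b
      · rcases le_or_gt a b with hle | hlt
        · rcases eq_or_lt_of_le hle with rfl | hlt'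
          · rfl
          · simp only [gmat, dif_pos h, dif_pos h.symm, dif_pos hle, dif_neg (not_le_of_gt hlt')]
        · simp only [gmat, dif_pos h, dif_pos h.symm, dif_pos hlt.le, dif_neg (not_le_of_gt hlt)]
      · simp only [gmat, dif_neg h, dif_neg (show ¬ t b = t a from fun hh => h hh.symm)]
    · show gmat t w (.inl b) (.inl a) = gmat t w (.inr a) (.inr b)
      rfl
    · show gmat t w (.inr b) (.inr a) = gmat t w (.inl a) (.inl b)
      rfl
    · show gmat t w (.inl b) (.inr a) = gmat t w (.inl a) (.inr b)
      by_cases h : t a = t b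
      · rcases le_or_gt a b with hle | hlt
        · rcases eq_or_lt_of_le hle with rfl | hlt'
          · rfl
          · simp only [gmat, dif_pos h, dif_pos h.symm, dif_pos hle, dif_neg (not_le_of_gt hlt')]
        · simp only [gmat, dif_pos h, dif_pos h.symm, dif_pos hlt.le, dif_neg (not_le_of_gt hlt)]
      · simp only [gmat, dif_neg h, dif_neg (show ¬ t b = t a from fun hh => h hh.symm)]
  · rintro (a | a) (b | b) hne <;>
      simp only [Sum.elim_inl, Sum.elim_inr] at hne <;>
      simp only [gmat, dif_neg hne,
        dif_neg (show ¬ t b = t a from fun hh => hne hh.symm)]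

lemma phi_injective : Function.Injective (phi t) := by
  rw [← LinearMap.ker_eq_bot, LinearMap.ker_eq_bot']
  intro x hx
  obtain ⟨hsym, hsupp⟩ := mem_spCent_tDiag.mp x.2
  have h1 : ∀ p : {p : Fin n × Fin n // t p.1 = t p.2},
      x.1 (.inl p.1.1) (.inl p.1.2) = 0 := fun p => congrFun (congrArg Prod.fst hx) p
  have h2 : ∀ p : {p : Fin n × Fin n // t p.1 = t p.2 ∧ p.1 ≤ p.2},
      x.1 (.inl p.1.1) (.inr p.1.2) = 0 := fun p =>
    congrFun (congrArg (Prod.fst ∘ Prod.snd) hx) p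
  have h3 : ∀ p : {p : Fin n × Fin n // t p.1 = t p.2 ∧ p.1 ≤ p.2},
      x.1 (.inr p.1.1) (.inl p.1.2) = 0 := fun p =>
    congrFun (congrArg (Prod.snd ∘ Prod.snd) hx) p
  apply Subtype.ext
  ext a b
  show x.1 a b = (0 : Matrix _ _ k) a b
  rw [Matrix.zero_apply]
  rcases a with i | i <;> rcases b with j | j
  · by_cases h : t i = t j
    · exact h1 ⟨(i, j), h⟩
    · exact hsupp _ _ h
  · by_cases h : t i = t j
    · rcases le_total i j with hle | hle
      · exact h2 ⟨(i, j), ⟨h, hle⟩⟩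
      · rw [sym2 hsym]
        exact h2 ⟨(j, i), ⟨h.symm, hle⟩⟩
    · exact hsupp _ _ h
  · by_cases h : t i = t j
    · rcases le_total i j with hle | hle
      · exact h3 ⟨(i, j), ⟨h, hle⟩⟩
      · rw [sym2 hsym]
        exact h3 ⟨(j, i), ⟨h.symm, hle⟩⟩
    · exact hsupp _ _ h
  · by_cases h : t i = t j
    · rw [sym2 hsym]
      exact h1 ⟨(j, i), h.symm⟩
    · exact hsupp _ _ h

lemma phi_surjective : Function.Surjective (phi t) := by
  intro w
  refine ⟨⟨gmat t w, gmat_mem t w⟩, ?_⟩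
  refine Prod.ext ?_ (Prod.ext ?_ ?_)
  · funext p
    show gmat t w (.inl p.1.1) (.inl p.1.2) = w.1 p
    simp only [gmat, dif_pos p.2]
  · funext p
    show gmat t w (.inl p.1.1) (.inr p.1.2) = w.2.1 p
    simp only [gmat, dif_pos p.2.1, dif_pos p.2.2]
  · funext p
    show gmat t w (.inr p.1.1) (.inl p.1.2) = w.2.2 p
    simp only [gmat, dif_pos p.2.1, dif_pos p.2.2]

lemma finrank_spCent_tDiag :
    Module.finrank k (spCent k n (tDiag k n t)) =
      Fintype.card {p : Fin n × Fin n // t p.1 = t p.2} +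
      (Fintype.card {p : Fin n × Fin n // t p.1 = t p.2 ∧ p.1 ≤ p.2} +
       Fintype.card {p : Fin n × Fin n // t p.1 = t p.2 ∧ p.1 ≤ p.2}) := by
  have e := LinearEquiv.ofBijective (phi t) ⟨phi_injective t, phi_surjective t⟩
  rw [e.finrank_eq]
  simp [Module.finrank_prod, Module.finrank_pi]

end dims

section cards
variable [DecidableEq k] (t : Fin n → k)

private def Aset : Finset (Fin n × Fin n) := Finset.univ.filter (fun p => t p.1 = t p.2)
private def Bset : Finset (Fin n × Fin n) := Finset.univ.filter (fun p => t p.1 = t p.2 ∧ p.1 ≤ p.2)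
private def B'set : Finset (Fin n × Fin n) := Finset.univ.filter (fun p => t p.1 = t p.2 ∧ p.2 ≤ p.1)
private def Dset : Finset (Fin n × Fin n) := Finset.univ.image (fun i => (i, i))

lemma card_Dset : (Dset (n := n)).card = n := by
  rw [Dset, Finset.card_image_of_injective _ (fun i j h => congrArg Prod.fst h),
    Finset.card_univ, Fintype.card_fin]

lemma mem_Dset {p : Fin n × Fin n} : p ∈ Dset ↔ p.1 = p.2 := by
  rcases p with ⟨i, j⟩
  simp only [Dset, Finset.mem_image, Finset.mem_univ, true_and]
  constructor
  · rintro ⟨a, h⟩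
    injection h with h1 h2
    rw [← h1, ← h2]
  · intro h
    subst h
    exact ⟨i, rfl⟩

lemma union_B : Bset t ∪ B'set t = Aset t := by
  ext ⟨i, j⟩
  simp only [Bset, B'set, Aset, Finset.mem_union, Finset.mem_filter, Finset.mem_univ, true_and]
  rcases le_total i j with h | h
  · tauto
  · have := fun ht : t i = t j => ht.symm
    tauto

lemma inter_B : Bset t ∩ B'set t = Dset := by
  ext ⟨i, j⟩
  simp only [Bset, B'set, Finset.mem_inter, Finset.mem_filter, Finset.mem_univ, true_and,
    mem_Dset]
  constructor
  · rintro ⟨⟨h, h1⟩, ⟨h', h2⟩⟩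
    exact le_antisymm h1 h2
  · rintro h
    subst h
    exact ⟨⟨rfl, le_refl _⟩, ⟨rfl, le_refl _⟩⟩

lemma card_B'_eq : (B'set t).card = (Bset t).card := by
  apply Finset.card_nbij' (fun p => p.swap) (fun p => p.swap)
  · intro p hp
    simp only [B'set, Bset, Finset.mem_coe, Finset.mem_filter, Finset.mem_univ, true_and] at hp ⊢
    exact ⟨hp.1.symm, hp.2⟩
  · intro p hp
    simp only [B'set, Bset, Finset.mem_coe, Finset.mem_filter, Finset.mem_univ, true_and] at hp ⊢
    exact ⟨hp.1.symm, hp.2⟩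
  · intro p _; simp
  · intro p _; simp

lemma card_A_eq : Fintype.card {p : Fin n × Fin n // t p.1 = t p.2} = (Aset t).card := by
  rw [Fintype.card_subtype]; rfl

lemma card_B_eq : Fintype.card {p : Fin n × Fin n // t p.1 = t p.2 ∧ p.1 ≤ p.2}
    = (Bset t).card := by
  rw [Fintype.card_subtype]; rfl

lemma cardA_add : (Aset t).card + n = (Bset t).card + (Bset t).card := by
  have h := Finset.card_union_add_card_inter (Bset t) (B'set t)
  rw [union_B, inter_B, card_Dset, card_B'_eq] at h
  omega

lemma Dset_subset : Dset ⊆ Aset t := by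
  intro p hp
  rw [mem_Dset] at hp
  simp only [Aset, Finset.mem_filter, Finset.mem_univ, true_and, hp]

lemma n_le_cardA : n ≤ (Aset t).card := by
  have := Finset.card_le_card (Dset_subset t)
  rwa [card_Dset] at this

lemma cardA_eq_iff : (Aset t).card = n ↔ Function.Injective t := by
  constructor
  · intro h i j hij
    have heq : Dset = Aset t := Finset.eq_of_subset_of_card_le (Dset_subset t)
      (by rw [card_Dset, h])
    have : (i, j) ∈ Aset t := by
      simp only [Aset, Finset.mem_filter, Finset.mem_univ, true_and]; exact hij
    rw [← heq, mem_Dset] at this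
    exact this
  · intro hinj
    have : Aset t = Dset := by
      ext ⟨i, j⟩
      simp only [Aset, Finset.mem_filter, Finset.mem_univ, true_and, mem_Dset]
      exact ⟨fun h => hinj h, fun h => by subst h; rfl⟩
    rw [this, card_Dset]

lemma finrank_spCent_tDiag' :
    Module.finrank k (spCent k n (tDiag k n t)) =
      (Aset t).card + ((Bset t).card + (Bset t).card) := by
  rw [finrank_spCent_tDiag, card_A_eq, card_B_eq]

end cards

section part3
variable [DecidableEq k]

lemma tDiag_zero : tDiag k n (fun _ => (0 : k)) = 0 := by
  rw [tDiag_eq]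
  have : (Sum.elim (fun _ => (0:k)) (fun _ => (0:k)) : Fin n ⊕ Fin n → k) = fun _ => 0 := by
    funext a; cases a <;> rfl
  rw [this]
  exact Matrix.diagonal_zero

lemma mem_sp0 {x : Matrix (Fin n ⊕ Fin n) (Fin n ⊕ Fin n) k} :
    x ∈ spCent k n (tDiag k n (fun _ => (0 : k))) ↔ xᵀ * Jsp k n = Jsp k n * x := by
  rw [mem_spCent, tDiag_zero]
  simp

lemma finrank_sp0 :
    Module.finrank k (spCent k n (tDiag k n (fun _ => (0 : k)))) = 2 * (n * n) + n := by
  have h0 := finrank_spCent_tDiag' (fun _ => (0 : k)) (n := n)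
  have h1 := cardA_add (fun _ => (0 : k)) (n := n)
  have h2 : (Aset (fun _ => (0 : k)) (n := n)).card = n * n := by
    rw [Aset]
    simp
  omega

/-- restriction to strictly upper triangular entries (after identifying with `Fin (n+n)`). -/
def psi : Matrix (Fin n ⊕ Fin n) (Fin n ⊕ Fin n) k →ₗ[k]
    ({q : Fin (n + n) × Fin (n + n) // q.1 < q.2} → k) where
  toFun v := fun q => v (finSumFinEquiv.symm q.1.1) (finSumFinEquiv.symm q.1.2)
  map_add' _ _ := rfl
  map_smul' _ _ := rfl

lemma card_strict_upper :
    2 * Fintype.card {q : Fin (n + n) × Fin (n + n) // q.1 < q.2} + (n + n)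
      = (n + n) * (n + n) := by
  classical
  set N := n + n
  let U : Finset (Fin N × Fin N) := Finset.univ.filter (fun q => q.1 < q.2)
  let U' : Finset (Fin N × Fin N) := Finset.univ.filter (fun q => q.2 < q.1)
  let D : Finset (Fin N × Fin N) := Finset.univ.image (fun i => (i, i))
  have hDcard : D.card = N := by
    rw [Finset.card_image_of_injective _ (fun i j h => congrArg Prod.fst h),
      Finset.card_univ, Fintype.card_fin]
  have hD : ∀ p : Fin N × Fin N, p ∈ D ↔ p.1 = p.2 := by
    rintro ⟨i, j⟩
    simp only [D, Finset.mem_image, Finset.mem_univ, true_and]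
    constructor
    · rintro ⟨a, h⟩
      injection h with h1 h2
      rw [← h1, ← h2]
    · intro h; subst h; exact ⟨i, rfl⟩
  have hsplit := Finset.card_filter_add_card_filter_not
    (s := (Finset.univ : Finset (Fin N × Fin N))) (p := fun q => q.1 = q.2)
  have hfeq : Finset.univ.filter (fun q : Fin N × Fin N => q.1 = q.2) = D := by
    ext p
    rw [Finset.mem_filter, hD]
    simp
  have hfne : Finset.univ.filter (fun q : Fin N × Fin N => ¬ q.1 = q.2) = U ∪ U' := by
    ext ⟨i, j⟩
    simp only [U, U', Finset.mem_filter, Finset.mem_union, Finset.mem_univ, true_and]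
    constructor
    · exact fun h => lt_or_gt_of_ne h
    · rintro (h | h)
      · exact ne_of_lt h
      · exact (ne_of_lt h).symm
  have hdisj : Disjoint U U' := by
    rw [Finset.disjoint_left]
    intro p hp hp'
    simp only [U, U', Finset.mem_filter, Finset.mem_univ, true_and] at hp hp'
    exact absurd hp (lt_asymm hp')
  have hU' : U'.card = U.card := by
    refine Finset.card_nbij' (fun p => p.swap) (fun p => p.swap) ?_ ?_
      (fun p _ => Prod.swap_swap p) (fun p _ => Prod.swap_swap p)
    · intro p hp
      simp only [U, U', Finset.mem_coe, Finset.mem_filter, Finset.mem_univ, true_and] at hp ⊢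
      exact hp
    · intro p hp
      simp only [U, U', Finset.mem_coe, Finset.mem_filter, Finset.mem_univ, true_and] at hp ⊢
      exact hp
  have hcardU : Fintype.card {q : Fin N × Fin N // q.1 < q.2} = U.card := by
    rw [Fintype.card_subtype]
  have huniv : (Finset.univ : Finset (Fin N × Fin N)).card = N * N := by
    rw [Finset.card_univ, Fintype.card_prod, Fintype.card_fin]
  have h5 := congrArg Finset.card hfne
  rw [Finset.card_union_of_disjoint hdisj, hU'] at h5
  have h6 := congrArg Finset.card hfeq
  omega

lemma psi_vanish {v : Matrix (Fin n ⊕ Fin n) (Fin n ⊕ Fin n) k}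
    (hsym : vᵀ = v) (hdiag : ∀ a, v a a = 0) (hv : psi v = 0) : v = 0 := by
  have key : ∀ a b : Fin n ⊕ Fin n, finSumFinEquiv a < finSumFinEquiv b → v a b = 0 := by
    intro a b h
    have := congrFun hv ⟨(finSumFinEquiv a, finSumFinEquiv b), h⟩
    change v (finSumFinEquiv.symm (finSumFinEquiv a)) (finSumFinEquiv.symm (finSumFinEquiv b)) = 0
      at this
    simpa using this
  ext a b
  rw [Matrix.zero_apply]
  rcases lt_trichotomy (finSumFinEquiv a) (finSumFinEquiv b) with h | h | h
  · exact key a b h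
  · have : a = b := finSumFinEquiv.injective h
    subst this
    exact hdiag a
  · rw [← hsym, Matrix.transpose_apply]
    exact key b a h

lemma range_symm_diag [CharP k 2] {x y : Matrix (Fin n ⊕ Fin n) (Fin n ⊕ Fin n) k}
    (hx : xᵀ * Jsp k n = Jsp k n * x) (hy : yᵀ * Jsp k n = Jsp k n * y) :
    (Jsp k n * (x * y - y * x))ᵀ = Jsp k n * (x * y - y * x) ∧
    ∀ a, (Jsp k n * (x * y - y * x)) a a = 0 := by
  have key : ∀ a b : Matrix (Fin n ⊕ Fin n) (Fin n ⊕ Fin n) k,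
      aᵀ * Jsp k n = Jsp k n * a → bᵀ * Jsp k n = Jsp k n * b →
      (Jsp k n * (a * b))ᵀ = Jsp k n * (b * a) := by
    intro a b ha hb
    calc (Jsp k n * (a * b))ᵀ = (a * b)ᵀ * (Jsp k n)ᵀ := by rw [Matrix.transpose_mul]
    _ = bᵀ * (aᵀ * Jsp k n) := by rw [Matrix.transpose_mul, jsp_transpose, Matrix.mul_assoc]
    _ = (bᵀ * Jsp k n) * a := by rw [ha, Matrix.mul_assoc]
    _ = Jsp k n * (b * a) := by rw [hb, Matrix.mul_assoc]
  have h1 : (Jsp k n * (x * y))ᵀ = Jsp k n * (y * x) := key x y hx hy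
  have h2 : (Jsp k n * (y * x))ᵀ = Jsp k n * (x * y) := key y x hy hx
  have hexp : Jsp k n * (x * y - y * x) = Jsp k n * (x * y) - Jsp k n * (y * x) := by
    rw [Matrix.mul_sub]
  have hswap : ∀ A B : Matrix (Fin n ⊕ Fin n) (Fin n ⊕ Fin n) k, A - B = B - A := by
    intro A B
    ext a b
    simp only [Matrix.sub_apply, CharTwo.sub_eq_add]
    exact add_comm _ _
  constructor
  · rw [hexp, Matrix.transpose_sub, h1, h2, hswap]
  · intro a
    rw [hexp, Matrix.sub_apply]
    have : (Jsp k n * (y * x)) a a = (Jsp k n * (x * y)) a a := by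
      conv_lhs => rw [← h1]
      rfl
    rw [this, sub_self]

lemma centralizer_lower_bound [CharP k 2]
    (x : Matrix (Fin n ⊕ Fin n) (Fin n ⊕ Fin n) k)
    (hx : xᵀ * Jsp k n = Jsp k n * x) :
    2 * n ≤ Module.finrank k (spCent k n x) := by
  set sp0 : Submodule k (Matrix (Fin n ⊕ Fin n) (Fin n ⊕ Fin n) k) :=
    spCent k n (tDiag k n (fun _ => (0 : k))) with hsp0
  let Lmap : sp0 →ₗ[k] Matrix (Fin n ⊕ Fin n) (Fin n ⊕ Fin n) k :=
    (LinearMap.mulLeft k (Jsp k n)).comp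
      ((LinearMap.mulLeft k x - LinearMap.mulRight k x).comp sp0.subtype)
  have hLapp : ∀ y : sp0, Lmap y = Jsp k n * (x * y.1 - y.1 * x) := by
    intro y; rfl
  have hJJ : Jsp k n * Jsp k n = 1 := jsp_mul_jsp
  have hker : Submodule.map sp0.subtype (LinearMap.ker Lmap) = spCent k n x := by
    ext v
    rw [Submodule.mem_map]
    constructor
    · rintro ⟨y, hy, rfl⟩
      rw [LinearMap.mem_ker, hLapp] at hy
      have h0 : x * y.1 - y.1 * x = 0 := by
        have := congrArg (fun z => Jsp k n * z) hy
        simpa [← Matrix.mul_assoc, hJJ] using this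
      refine ⟨mem_sp0.mp y.2, ?_⟩
      rw [← sub_eq_zero]
      exact h0
    · rintro ⟨hv1, hv2⟩
      refine ⟨⟨v, mem_sp0.mpr hv1⟩, ?_, rfl⟩
      rw [LinearMap.mem_ker, hLapp]
      simp only [sub_eq_zero.mpr hv2, Matrix.mul_zero]
  have hrank : Module.finrank k (spCent k n x) = Module.finrank k (LinearMap.ker Lmap) := by
    rw [← hker, Submodule.finrank_map_subtype_eq]
  have hrn := LinearMap.finrank_range_add_finrank_ker Lmap
  have hrange : Module.finrank k (LinearMap.range Lmap)
      ≤ Fintype.card {q : Fin (n + n) × Fin (n + n) // q.1 < q.2} := by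
    have hinj : Function.Injective ((psi (k := k) (n := n)).comp (LinearMap.range Lmap).subtype) := by
      rw [← LinearMap.ker_eq_bot, LinearMap.ker_eq_bot']
      intro v hv
      obtain ⟨y, hy⟩ := v.2
      have hprops := range_symm_diag hx (mem_sp0.mp y.2)
      rw [hLapp] at hy
      apply Subtype.ext
      apply psi_vanish (v := v.1)
      · rw [← hy]; exact hprops.1
      · intro a; rw [← hy]; exact hprops.2 a
      · exact hv
    have := LinearMap.finrank_le_finrank_of_injective hinj
    rwa [Module.finrank_pi] at this
  have hcard := card_strict_upper (n := n)
  have hsp0rank : Module.finrank k sp0 = 2 * (n * n) + n := finrank_sp0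
  have hnn : (n + n) * (n + n) = 4 * (n * n) := by ring
  omega
end part3

/-- For `s = diag(t₁,…,tₙ,t₁,…,tₙ) ∈ 𝔱`, the centralizer of `s` in
`𝔰𝔭_{2n}(k)` has dimension at least `3n`, with equality iff the `tᵢ` are pairwise distinct.
In particular no element of `𝔱` has centralizer of dimension `n`, so `𝔰𝔭_{2n}(k)` contains
no regular semisimple element (diagonalizable, with centralizer of dimension `n`). -/
theorem stmt_12 (k : Type) [Field k] [IsAlgClosed k] [CharP k 2] (n : ℕ) (hn : 1 ≤ n) :
    (∀ t : Fin n → k,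
      3 * n ≤ Module.finrank k (spCent k n (tDiag k n t)) ∧
      (Module.finrank k (spCent k n (tDiag k n t)) = 3 * n ↔ Function.Injective t)) ∧
    (∀ t : Fin n → k, Module.finrank k (spCent k n (tDiag k n t)) ≠ n) ∧
    ¬ ∃ x : Matrix (Fin n ⊕ Fin n) (Fin n ⊕ Fin n) k,
      xᵀ * Jsp k n = Jsp k n * x ∧
      (∃ u : Matrix (Fin n ⊕ Fin n) (Fin n ⊕ Fin n) k, IsUnit u ∧
        ∃ d : Fin n ⊕ Fin n → k, u * x * u⁻¹ = Matrix.diagonal d) ∧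
      Module.finrank k (spCent k n x) = n := by
  letI : DecidableEq k := Classical.decEq k
  have key : ∀ t : Fin n → k,
      3 * n ≤ Module.finrank k (spCent k n (tDiag k n t)) ∧
      (Module.finrank k (spCent k n (tDiag k n t)) = 3 * n ↔ Function.Injective t) := by
    intro t
    have hf := finrank_spCent_tDiag' t
    have h1 := cardA_add t
    have h2 := n_le_cardA t
    have h3 := cardA_eq_iff t
    refine ⟨by omega, ?_⟩
    rw [← h3]
    constructor
    · intro h; omega
    · intro h; omega
  refine ⟨key, fun t hfin => ?_, ?_⟩
  · have := (key t).1
    omega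
  · rintro ⟨x, hx, -, hfin⟩
    have := centralizer_lower_bound x hx
    omega
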